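/- Let L be a Hermitian operator on ℂ^d with 0 ⪯ L ⪯ I, let ψ ∈ ℂ^d be a unit vector with Lψ = ψ, let τ ≥ 1 be such that ⟨φ|L|φ⟩ ≤ 1 − 1/τ for every unit vector φ orthogonal to ψ, and let ρ be a density matrix on ℂ^d. Let m ≥ 1, δ ∈ (0,1), ε > 0 and ε' ≥ 0 with ε > τε', and let ω₁, …, ω_T be independent, identically distributed real random variables with E[ω₁] = tr(Lρ), values in [−1, 2^m] almost surely, and Var[ω₁] ≤ 3.25. If T ≥ (6.5/(ε/τ − ε')² + (2·2^m)/(3(ε/τ − ε')))·ln(1/δ) and ⟨ψ|ρ|ψ⟩ < 1 − ε, then the probability that (1/T)·Σ_t ω_t ≥ 1 − ε' is at most δ. -/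

import Mathlib

open Matrix MeasureTheory ProbabilityTheory
open scoped ComplexOrder

section ShadowAux


-- exp u ≤ 1 + u + u²/2 for u ≤ 0
lemma exp_le_quad_of_nonpos {u : ℝ} (hu : u ≤ 0) : Real.exp u ≤ 1 + u + u ^ 2 / 2 := by
  have hf : ∀ x : ℝ, HasDerivAt (fun y => 1 + y + y ^ 2 / 2 - Real.exp y)
      (1 + x - Real.exp x) x := by
    intro x
    have h1 : HasDerivAt (fun y : ℝ => 1 + y) 1 x := (hasDerivAt_id x).const_add 1
    have h2 : HasDerivAt (fun y : ℝ => y ^ 2 / 2) x x := by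
      simpa using (hasDerivAt_pow 2 x).div_const 2
    exact ((h1.add h2).sub (Real.hasDerivAt_exp x))
  have hanti : AntitoneOn (fun y => 1 + y + y ^ 2 / 2 - Real.exp y) (Set.Icc u 0) := by
    apply antitoneOn_of_deriv_nonpos (convex_Icc u 0)
    · exact (Continuous.sub (by continuity) Real.continuous_exp).continuousOn
    · intro x hx
      exact ((hf x).differentiableAt).differentiableWithinAt
    · intro x hx
      rw [(hf x).deriv]
      linarith [Real.add_one_le_exp x]
  have := hanti (Set.mem_Icc.2 ⟨le_refl u, hu⟩) (Set.mem_Icc.2 ⟨hu, le_refl (0:ℝ)⟩) hu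
  simp at this
  linarith


lemma fact_ge : ∀ k : ℕ, 2 * 3 ^ k ≤ (k + 2).factorial := by
  intro k
  induction k with
  | zero => simp [Nat.factorial]
  | succ n ih =>
      have : (n + 3).factorial = (n + 3) * (n + 2).factorial := rfl
      calc 2 * 3 ^ (n+1) = 3 * (2 * 3 ^ n) := by ring
      _ ≤ 3 * (n+2).factorial := by omega
      _ ≤ (n+3) * (n+2).factorial := by
          exact Nat.mul_le_mul_right _ (by omega)
      _ = (n+3).factorial := rfl

lemma exp_le_quad_of_lt_three {u : ℝ} (hu : 0 ≤ u) (hu3 : u < 3) :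
    Real.exp u ≤ 1 + u + u ^ 2 / (2 * (1 - u / 3)) := by
  have hsum : Summable (fun n : ℕ => u ^ n / n.factorial) :=
    Real.summable_pow_div_factorial u
  have hexp : Real.exp u = ∑' n : ℕ, u ^ n / n.factorial := by
    rw [Real.exp_eq_exp_ℝ, NormedSpace.exp_eq_tsum_div]
  have hsplit := Summable.sum_add_tsum_nat_add 2 hsum
  have hr : |u / 3| < 1 := by rw [abs_of_nonneg (by linarith)]; linarith
  have hgeo : Summable (fun k : ℕ => u ^ 2 / 2 * (u / 3) ^ k) :=
    (summable_geometric_of_lt_one (by linarith) (by linarith)).mul_left _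
  have hterm : ∀ k : ℕ, u ^ (k + 2) / (k + 2).factorial ≤ u ^ 2 / 2 * (u / 3) ^ k := by
    intro k
    have h1 : u ^ (k + 2) = u ^ 2 * u ^ k := by ring
    have h2 : (2 * 3 ^ k : ℝ) ≤ ((k + 2).factorial : ℝ) := by
      exact_mod_cast fact_ge k
    have h3 : (0:ℝ) < (3:ℝ)^k := by positivity
    have h4 : (0:ℝ) < ((k+2).factorial : ℝ) := by positivity
    rw [h1, div_pow, div_le_iff₀ h4]
    calc u ^ 2 * u ^ k = (u ^ 2 * u ^ k / (2 * 3 ^ k)) * (2 * 3 ^ k) := by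
          field_simp
    _ ≤ (u ^ 2 * u ^ k / (2 * 3 ^ k)) * ((k+2).factorial : ℝ) := by
        apply mul_le_mul_of_nonneg_left h2 (by positivity)
    _ = u ^ 2 / 2 * (u ^ k / 3 ^ k) * ((k+2).factorial : ℝ) := by ring
  have htail : ∑' k : ℕ, u ^ (k + 2) / (k + 2).factorial
      ≤ u ^ 2 / 2 * (1 - u / 3)⁻¹ := by
    calc ∑' k : ℕ, u ^ (k + 2) / (k + 2).factorial
        ≤ ∑' k : ℕ, u ^ 2 / 2 * (u / 3) ^ k := by
          exact Summable.tsum_le_tsum hterm ((summable_nat_add_iff 2).2 hsum) hgeo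
    _ = u ^ 2 / 2 * (1 - u / 3)⁻¹ := by
        rw [tsum_mul_left, tsum_geometric_of_lt_one (by linarith) (by linarith)]
  have hhead : ∑ i ∈ Finset.range 2, u ^ i / i.factorial = 1 + u := by
    simp [Finset.sum_range_succ, Nat.factorial]
  have : Real.exp u = (1 + u) + ∑' k : ℕ, u ^ (k + 2) / (k + 2).factorial := by
    rw [hexp, ← hsplit, hhead]
  rw [this]
  have : u ^ 2 / (2 * (1 - u / 3)) = u ^ 2 / 2 * (1 - u / 3)⁻¹ := by
    field_simp
  linarith [htail]


lemma exp_le_quad {u c0 : ℝ} (hu : u ≤ c0) (hc0 : 0 ≤ c0) (hc3 : c0 < 3) :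
    Real.exp u ≤ 1 + u + u ^ 2 / (2 * (1 - c0 / 3)) := by
  have hd : 0 < 2 * (1 - c0 / 3) := by linarith
  rcases le_or_gt u 0 with h | h
  · have := exp_le_quad_of_nonpos h
    have h2 : u ^ 2 / 2 ≤ u ^ 2 / (2 * (1 - c0 / 3)) := by
      apply div_le_div_of_nonneg_left (sq_nonneg u) hd (by linarith)
    linarith
  · have := exp_le_quad_of_lt_three h.le (lt_of_le_of_lt hu hc3)
    have h2 : u ^ 2 / (2 * (1 - u / 3)) ≤ u ^ 2 / (2 * (1 - c0 / 3)) := by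
      apply div_le_div_of_nonneg_left (sq_nonneg u) hd (by linarith)
    linarith

lemma mgf_le_of_bounded {Ω : Type*} [MeasurableSpace Ω] (μ : Measure Ω)
    [IsProbabilityMeasure μ] (X : Ω → ℝ) (hXm : Measurable X) (B : ℝ) (hB : 1 ≤ B)
    (hbd : ∀ᵐ x ∂μ, X x ∈ Set.Icc (-1 : ℝ) B) (μ₀ v s : ℝ) (hμ0 : 0 ≤ μ₀)
    (hmean : ∫ x, X x ∂μ = μ₀) (hv : variance X μ ≤ v) (hv0 : 0 ≤ v)
    (hs : 0 < s) (hsB : s * B < 3) :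
    mgf X μ s ≤ Real.exp (s * μ₀ + s ^ 2 * v / (2 * (1 - s * B / 3))) := by
  set K : ℝ := 1 / (2 * (1 - s * B / 3)) with hK
  have hsB0 : 0 ≤ s * B := by positivity
  have hdpos : 0 < 2 * (1 - s * B / 3) := by nlinarith
  have hK0 : 0 ≤ K := by positivity
  -- X is MemLp 2
  have hXtop : MemLp X ⊤ μ := by
    refine memLp_top_of_bound hXm.aestronglyMeasurable B ?_
    filter_upwards [hbd] with x hx
    rw [Real.norm_eq_abs, abs_le]
    exact ⟨le_trans (by linarith) hx.1, hx.2⟩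
  have hX2 : MemLp X 2 μ := hXtop.mono_exponent le_top
  have hX1 : Integrable X μ := hX2.integrable one_le_two
  set Y : Ω → ℝ := fun x => X x - μ₀ with hYdef
  have hYm : Measurable Y := hXm.sub measurable_const
  have hY2 : MemLp Y 2 μ := hX2.sub (memLp_const μ₀)
  have hYint : Integrable Y μ := hX1.sub (integrable_const μ₀)
  have hYmean : ∫ x, Y x ∂μ = 0 := by
    rw [integral_sub hX1 (integrable_const μ₀)]
    simp [hmean]
  have hYsq : Integrable (fun x => Y x ^ 2) μ := by
    simpa [pow_two] using hY2.integrable_sq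
  have hYvar : ∫ x, Y x ^ 2 ∂μ = variance X μ := by
    rw [variance_eq_integral hXm.aemeasurable]
    congr 1
    ext x
    simp [hYdef, hmean]
  -- pointwise bound
  have hpt : ∀ᵐ x ∂μ, Real.exp (s * Y x) ≤ 1 + s * Y x + K * (s * Y x) ^ 2 := by
    filter_upwards [hbd] with x hx
    have hu : s * Y x ≤ s * B := by
      apply mul_le_mul_of_nonneg_left _ hs.le
      simp only [hYdef]
      linarith [hx.2]
    have := exp_le_quad hu hsB0 hsB
    calc Real.exp (s * Y x) ≤ 1 + s * Y x + (s * Y x) ^ 2 / (2 * (1 - s * B / 3)) := this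
    _ = 1 + s * Y x + K * (s * Y x) ^ 2 := by rw [hK]; ring
  -- integrability of exp(s Y)
  have hexpY : Integrable (fun x => Real.exp (s * Y x)) μ := by
    refine Integrable.mono' (integrable_const (Real.exp (s * B)))
      ((hYm.const_mul s).exp.aestronglyMeasurable) ?_
    filter_upwards [hbd] with x hx
    rw [Real.norm_eq_abs, abs_of_pos (Real.exp_pos _), Real.exp_le_exp]
    apply mul_le_mul_of_nonneg_left _ hs.le
    simp only [hYdef]; linarith [hx.2]
  have hRHSint : Integrable (fun x => 1 + s * Y x + K * (s * Y x) ^ 2) μ := by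
    apply Integrable.add
    · exact (integrable_const 1).add (hYint.const_mul s)
    · have : (fun x => K * (s * Y x) ^ 2) = fun x => (K * s ^ 2) * Y x ^ 2 := by
        ext x; ring
      rw [this]
      exact hYsq.const_mul _
  have hint : ∫ x, Real.exp (s * Y x) ∂μ ≤ 1 + K * s ^ 2 * v := by
    calc ∫ x, Real.exp (s * Y x) ∂μ ≤ ∫ x, (1 + s * Y x + K * (s * Y x) ^ 2) ∂μ :=
      integral_mono_ae hexpY hRHSint hpt
    _ = 1 + K * s ^ 2 * variance X μ := by
        have h1 : (fun x => 1 + s * Y x + K * (s * Y x) ^ 2)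
            = fun x => (1 + s * Y x) + (K * s ^ 2) * Y x ^ 2 := by ext x; ring
        rw [h1]
        have e1 : ∫ x, ((1 + s * Y x) + (K * s ^ 2) * Y x ^ 2) ∂μ
            = (∫ x, (1 + s * Y x) ∂μ) + ∫ x, (K * s ^ 2) * Y x ^ 2 ∂μ :=
          integral_add ((integrable_const 1).add (hYint.const_mul s)) (hYsq.const_mul _)
        have e2 : ∫ x, (1 + s * Y x) ∂μ = (∫ x, (1:ℝ) ∂μ) + ∫ x, s * Y x ∂μ :=
          integral_add (integrable_const 1) (hYint.const_mul s)
        rw [e1, e2, integral_const_mul, integral_const_mul, hYmean, hYvar]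
        simp
    _ ≤ 1 + K * s ^ 2 * v := by
        have h0 : 0 ≤ K * s ^ 2 := mul_nonneg hK0 (sq_nonneg s)
        nlinarith
  have hmgf : mgf X μ s = Real.exp (s * μ₀) * ∫ x, Real.exp (s * Y x) ∂μ := by
    have hpt2 : (fun x => Real.exp (s * X x))
        = fun x => Real.exp (s * μ₀) * Real.exp (s * Y x) := by
      funext x
      rw [← Real.exp_add]
      congr 1
      simp only [hYdef]
      ring
    rw [mgf, hpt2, integral_const_mul]
  rw [hmgf, Real.exp_add]
  have hfin : ∫ x, Real.exp (s * Y x) ∂μ ≤ Real.exp (s ^ 2 * v / (2 * (1 - s * B / 3))) := by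
    calc ∫ x, Real.exp (s * Y x) ∂μ ≤ 1 + K * s ^ 2 * v := hint
    _ ≤ Real.exp (K * s ^ 2 * v) := by linarith [Real.add_one_le_exp (K * s ^ 2 * v)]
    _ = Real.exp (s ^ 2 * v / (2 * (1 - s * B / 3))) := by rw [hK]; ring_nf
  have hIpos : 0 ≤ ∫ x, Real.exp (s * Y x) ∂μ := by positivity
  exact mul_le_mul_of_nonneg_left hfin (Real.exp_pos _).le


-- star v ⬝ᵥ v = ‖v‖²
lemma dot_self_eq {d : ℕ} (v : Fin d → ℂ) :
    star v ⬝ᵥ v = ((∑ i, ‖v i‖ ^ 2 : ℝ) : ℂ) := by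
  rw [dotProduct]
  push_cast
  congr 1
  funext i
  simp only [Pi.star_apply]
  rw [show ((‖v i‖ : ℂ) ^ 2) = ((‖v i‖ ^ 2 : ℝ) : ℂ) by push_cast; ring,
    Complex.sq_norm, Complex.normSq_eq_conj_mul_self]
  rfl


lemma trace_mul_re_nonneg {d : ℕ} {A B : Matrix (Fin d) (Fin d) ℂ}
    (hA : A.PosSemidef) (hB : B.PosSemidef) : 0 ≤ ((A * B).trace).re := by
  obtain ⟨C, rfl⟩ : ∃ C : Matrix (Fin d) (Fin d) ℂ, B = Cᴴ * C := by
    open scoped MatrixOrder in exact CStarAlgebra.nonneg_iff_eq_star_mul_self.mp hB.nonneg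
  rw [← Matrix.mul_assoc, Matrix.trace_mul_cycle]
  have h := hA.mul_mul_conjTranspose_same C
  rw [Matrix.trace, Complex.re_sum]
  apply Finset.sum_nonneg
  intro i _
  have := h.re_dotProduct_nonneg (Pi.single i 1)
  simpa [Matrix.diag, Matrix.mulVec_single, dotProduct, Pi.single_apply,
    Finset.sum_ite_eq] using this


lemma trace_mul_re_le {d : ℕ} (L ρ : Matrix (Fin d) (Fin d) ℂ)
    (hL : L.IsHermitian) (hL0 : L.PosSemidef)
    (ψ : Fin d → ℂ) (hψ : ∑ i, ‖ψ i‖ ^ 2 = 1) (hLψ : L *ᵥ ψ = ψ)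
    (τ : ℝ) (hτ : 1 ≤ τ)
    (hgap : ∀ φ : Fin d → ℂ, (∑ i, ‖φ i‖ ^ 2 = 1) → (star ψ ⬝ᵥ φ = 0) →
      (star φ ⬝ᵥ (L *ᵥ φ)).re ≤ 1 - 1 / τ)
    (hρ : ρ.PosSemidef) (hρtr : ρ.trace = 1) :
    ((L * ρ).trace).re ≤ (1 - 1 / τ) + (1 / τ) * (star ψ ⬝ᵥ (ρ *ᵥ ψ)).re := by
  have hτ0 : (0 : ℝ) < τ := lt_of_lt_of_le one_pos hτ
  have hτ1 : (0 : ℝ) ≤ 1 - 1 / τ := by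
    have : 1 / τ ≤ 1 := by rw [div_le_one hτ0]; exact hτ
    linarith
  have hψ1 : star ψ ⬝ᵥ ψ = 1 := by rw [dot_self_eq, hψ]; norm_num
  set P : Matrix (Fin d) (Fin d) ℂ := vecMulVec ψ (star ψ) with hP
  set M : Matrix (Fin d) (Fin d) ℂ :=
    ((1 - 1 / τ : ℝ) : ℂ) • 1 + ((1 / τ : ℝ) : ℂ) • P with hM
  -- P *ᵥ x = (star ψ ⬝ᵥ x) • ψ
  have hPmul : ∀ x : Fin d → ℂ, P *ᵥ x = (star ψ ⬝ᵥ x) • ψ := by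
    intro x
    funext i
    simp only [hP, mulVec, dotProduct, vecMulVec_apply, Pi.smul_apply, smul_eq_mul,
      Finset.sum_mul, Finset.mul_sum, Pi.star_apply]
    apply Finset.sum_congr rfl
    intro j _
    ring
  -- gap bound for any vector orthogonal to ψ
  have hgap' : ∀ φ : Fin d → ℂ, (star ψ ⬝ᵥ φ = 0) →
      (star φ ⬝ᵥ (L *ᵥ φ)).re ≤ (1 - 1 / τ) * (∑ i, ‖φ i‖ ^ 2) := by
    intro φ horth
    by_cases hz : φ = 0
    · simp [hz]
    · set n : ℝ := ∑ i, ‖φ i‖ ^ 2 with hn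
      have hn0 : 0 < n := by
        have : ∃ i, φ i ≠ 0 := by
          by_contra h
          push_neg at h
          exact hz (funext h)
        obtain ⟨i, hi⟩ := this
        have h1 : 0 < ‖φ i‖ ^ 2 := by
          have := norm_pos_iff.mpr hi
          positivity
        have h2 : ∀ j ∈ Finset.univ, (0:ℝ) ≤ ‖φ j‖ ^ 2 := fun j _ => by positivity
        exact lt_of_lt_of_le h1 (Finset.single_le_sum h2 (Finset.mem_univ i))
      set r : ℝ := Real.sqrt n with hr
      have hr0 : 0 < r := Real.sqrt_pos.mpr hn0
      set φ' : Fin d → ℂ := ((r : ℂ))⁻¹ • φ with hφ'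
      have hnorm : ∑ i, ‖φ' i‖ ^ 2 = 1 := by
        have : ∀ i, ‖φ' i‖ ^ 2 = r⁻¹ ^ 2 * ‖φ i‖ ^ 2 := by
          intro i
          simp only [hφ', Pi.smul_apply, smul_eq_mul, norm_mul, mul_pow, norm_inv,
            Complex.norm_real, Real.norm_eq_abs, abs_of_pos hr0]
        rw [Finset.sum_congr rfl fun i _ => this i, ← Finset.mul_sum, ← hn]
        rw [inv_pow, Real.sq_sqrt hn0.le]
        field_simp
      have horth' : star ψ ⬝ᵥ φ' = 0 := by
        simp only [hφ', dotProduct_smul, horth, smul_eq_mul, mul_zero]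
      have hfrac := hgap φ' hnorm horth'
      have hquad : star φ' ⬝ᵥ (L *ᵥ φ') = ((r⁻¹ ^ 2 : ℝ) : ℂ) * (star φ ⬝ᵥ (L *ᵥ φ)) := by
        simp only [hφ', mulVec_smul, dotProduct_smul, star_smul, smul_dotProduct]
        rw [star_inv₀]
        simp only [Complex.star_def, Complex.conj_ofReal, smul_eq_mul]
        push_cast
        ring
      have hre : (star φ' ⬝ᵥ (L *ᵥ φ')).re = r⁻¹ ^ 2 * (star φ ⬝ᵥ (L *ᵥ φ)).re := by
        rw [hquad, Complex.re_ofReal_mul]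
      rw [hre] at hfrac
      have hrn : r ^ 2 = n := Real.sq_sqrt hn0.le
      have : (star φ ⬝ᵥ (L *ᵥ φ)).re = n * (r⁻¹ ^ 2 * (star φ ⬝ᵥ (L *ᵥ φ)).re) := by
        rw [inv_pow, hrn]
        field_simp
      rw [this]
      calc n * (r⁻¹ ^ 2 * (star φ ⬝ᵥ (L *ᵥ φ)).re) ≤ n * (1 - 1/τ) :=
        mul_le_mul_of_nonneg_left hfrac hn0.le
      _ = (1 - 1/τ) * n := by ring
  -- M - L is PSD
  have hMLpsd : (M - L).PosSemidef := by
    rw [posSemidef_iff_dotProduct_mulVec]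
    constructor
    · have hPH : Pᴴ = P := by
        ext i j
        simp only [hP, conjTranspose_apply, vecMulVec_apply, Pi.star_apply, star_mul',
          star_star]
        ring
      show (M - L)ᴴ = M - L
      rw [conjTranspose_sub, hL.eq, hM, conjTranspose_add, conjTranspose_smul,
        conjTranspose_smul, conjTranspose_one, hPH]
      simp [Complex.star_def, Complex.conj_ofReal]
    · intro x
      set c : ℂ := star ψ ⬝ᵥ x with hc
      set φ : Fin d → ℂ := x - c • ψ with hφdef
      have hxd : x = φ + c • ψ := by simp [hφdef]
      have horth : star ψ ⬝ᵥ φ = 0 := by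
        simp only [hφdef, dotProduct_sub, dotProduct_smul, hψ1, smul_eq_mul, mul_one, ← hc,
          sub_self]
      have horth2 : star φ ⬝ᵥ ψ = 0 := by
        have := congrArg star horth
        rwa [star_dotProduct, star_star, star_zero] at this
      have hLφψ : star φ ⬝ᵥ (L *ᵥ ψ) = 0 := by rw [hLψ]; exact horth2
      have hψLφ : star ψ ⬝ᵥ (L *ᵥ φ) = 0 := by
        have h1 : star (star φ ⬝ᵥ (L *ᵥ ψ)) = 0 := by rw [hLφψ, star_zero]
        rw [star_dotProduct, star_star] at h1
        rw [star_mulVec, ← dotProduct_mulVec, hL.eq] at h1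
        exact h1
      -- quadratic forms
      have hLx : star x ⬝ᵥ (L *ᵥ x) = star φ ⬝ᵥ (L *ᵥ φ) + star c * c := by
        rw [hxd]
        simp only [mulVec_add, mulVec_smul, hLψ, star_add, star_smul, add_dotProduct,
          dotProduct_add, smul_dotProduct, dotProduct_smul, hψLφ, horth2, hψ1, hLφψ]
        simp [smul_eq_mul]
        ring
      have hPx : star x ⬝ᵥ (P *ᵥ x) = star c * c := by
        rw [hPmul x, ← hc, hxd]
        simp only [star_add, star_smul, add_dotProduct, smul_dotProduct, dotProduct_smul,
          horth2, hψ1, smul_eq_mul]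
        ring
      have hIx : star x ⬝ᵥ x = star φ ⬝ᵥ φ + star c * c := by
        rw [hxd]
        simp only [star_add, star_smul, add_dotProduct, dotProduct_add, smul_dotProduct,
          dotProduct_smul, horth, horth2, hψ1, smul_eq_mul]
        ring
      have hqform : star x ⬝ᵥ ((M - L) *ᵥ x)
          = ((1 - 1/τ : ℝ) : ℂ) * (star φ ⬝ᵥ φ) - star φ ⬝ᵥ (L *ᵥ φ) := by
        rw [sub_mulVec, dotProduct_sub, hM, add_mulVec, smul_mulVec, smul_mulVec,
          one_mulVec, dotProduct_add, dotProduct_smul, dotProduct_smul, hIx, hPx, hLx]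
        have : ((1/τ : ℝ) : ℂ) = 1 - ((1 - 1/τ : ℝ) : ℂ) := by push_cast; ring
        rw [this]
        simp only [smul_eq_mul]
        ring
      -- positivity in ℂ
      have hq0 := hL0.dotProduct_mulVec_nonneg φ
      obtain ⟨hqre, hqim⟩ := Complex.nonneg_iff.mp hq0
      have hφn := dot_self_eq φ
      have hgapφ := hgap' φ horth
      rw [hqform, hφn, Complex.nonneg_iff]
      constructor
      · rw [Complex.sub_re, Complex.re_ofReal_mul, Complex.ofReal_re]
        linarith
      · rw [Complex.sub_im, Complex.im_ofReal_mul, Complex.ofReal_im, mul_zero, ← hqim]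
        ring
  -- trace bound
  have h1 : 0 ≤ (((M - L) * ρ).trace).re := trace_mul_re_nonneg hMLpsd hρ
  have h2 : ((M - L) * ρ).trace = (M * ρ).trace - (L * ρ).trace := by
    rw [sub_mul, trace_sub]
  have h3 : (M * ρ).trace = ((1 - 1/τ : ℝ) : ℂ) + ((1/τ : ℝ) : ℂ) * (star ψ ⬝ᵥ (ρ *ᵥ ψ)) := by
    rw [hM, add_mul, smul_mul_assoc, smul_mul_assoc, one_mul, trace_add, trace_smul,
      trace_smul, hρtr]
    have hPρ : (P * ρ).trace = star ψ ⬝ᵥ (ρ *ᵥ ψ) := by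
      simp only [trace, diag, mul_apply, hP, vecMulVec_apply, dotProduct, mulVec,
        Pi.star_apply, Finset.mul_sum]
      rw [Finset.sum_comm]
      apply Finset.sum_congr rfl
      intro j _
      apply Finset.sum_congr rfl
      intro i _
      ring
    rw [hPρ]
    simp [smul_eq_mul]
  have h4 : ((M * ρ).trace).re = (1 - 1/τ) + (1/τ) * (star ψ ⬝ᵥ (ρ *ᵥ ψ)).re := by
    rw [h3]
    simp [Complex.add_re, Complex.mul_re, Complex.ofReal_re, Complex.ofReal_im]
  rw [h2] at h1
  simp only [Complex.sub_re] at h1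
  linarith [h1, h4.symm.le, h4.le]


end ShadowAux

/-- Soundness-only guarantee for the improved level-`m` shadow overlap protocol with random
Clifford measurements: if `ε > τε'`, `T ≥ (6.5/(ε/τ−ε')² + (2·2^m)/(3(ε/τ−ε')))·ln(1/δ)` and the
fidelity satisfies `⟨ψ|ρ|ψ⟩ < 1 − ε`, then the empirical shadow overlap exceeds the threshold
`1 − ε'` with probability at most `δ`. -/
theorem improved_clifford_soundness {d : ℕ}
    (L ρ : Matrix (Fin d) (Fin d) ℂ)
    (hL : L.IsHermitian) (hL0 : L.PosSemidef)
    (hL1 : ((1 : Matrix (Fin d) (Fin d) ℂ) - L).PosSemidef)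
    (ψ : Fin d → ℂ) (hψ : ∑ i, ‖ψ i‖ ^ 2 = 1) (hLψ : L *ᵥ ψ = ψ)
    (τ : ℝ) (hτ : 1 ≤ τ)
    (hgap : ∀ φ : Fin d → ℂ, (∑ i, ‖φ i‖ ^ 2 = 1) → (star ψ ⬝ᵥ φ = 0) →
      (star φ ⬝ᵥ (L *ᵥ φ)).re ≤ 1 - 1 / τ)
    (hρ : ρ.PosSemidef) (hρtr : ρ.trace = 1)
    {Ω : Type*} [MeasurableSpace Ω] (μ : Measure Ω) [IsProbabilityMeasure μ]
    (m T : ℕ) (hm : 1 ≤ m) (δ ε ε' : ℝ) (hδ : δ ∈ Set.Ioo (0 : ℝ) 1) (hε : 0 < ε)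
    (hε' : 0 ≤ ε') (hεε' : ε > τ * ε')
    (ω : Fin T → Ω → ℝ) (hmeas : ∀ t, Measurable (ω t))
    (hindep : iIndepFun ω μ)
    (hident : ∀ t t', Measure.map (ω t) μ = Measure.map (ω t') μ)
    (hmean : ∀ t, ∫ x, ω t x ∂μ = ((L * ρ).trace).re)
    (hbound : ∀ t, ∀ᵐ x ∂μ, ω t x ∈ Set.Icc (-1 : ℝ) (2 ^ m))
    (hvar : ∀ t, variance (ω t) μ ≤ 3.25)
    (hT : (T : ℝ) ≥ (6.5 / (ε / τ - ε') ^ 2 + 2 * 2 ^ m / (3 * (ε / τ - ε')))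
      * Real.log (1 / δ))
    (hfid : (star ψ ⬝ᵥ (ρ *ᵥ ψ)).re < 1 - ε) :
    μ {x | (∑ t, ω t x) / T ≥ 1 - ε'} ≤ ENNReal.ofReal δ := by
  have hτ0 : (0 : ℝ) < τ := lt_of_lt_of_le one_pos hτ
  set a : ℝ := ε / τ - ε' with ha_def
  have ha : 0 < a := by
    have : ε' < ε / τ := by rw [lt_div_iff₀ hτ0]; linarith [hεε']
    simpa [ha_def] using sub_pos.mpr this
  set B : ℝ := 2 ^ m with hB_def
  have hB1 : (1 : ℝ) ≤ B := one_le_pow₀ (by norm_num)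
  have hB0 : (0 : ℝ) < B := lt_of_lt_of_le one_pos hB1
  set v : ℝ := 3.25 with hv_def
  have hv0 : (0 : ℝ) < v := by norm_num [hv_def]
  set μ₀ : ℝ := ((L * ρ).trace).re with hμ₀_def
  have hμ0nn : 0 ≤ μ₀ := trace_mul_re_nonneg hL0 hρ
  have hμ0le : μ₀ ≤ 1 - ε / τ := by
    have h1 := trace_mul_re_le L ρ hL hL0 ψ hψ hLψ τ hτ hgap hρ hρtr
    have h2 : (1 / τ) * (star ψ ⬝ᵥ (ρ *ᵥ ψ)).re ≤ (1 / τ) * (1 - ε) := by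
      apply mul_le_mul_of_nonneg_left hfid.le (by positivity)
    have h3 : (1 - 1 / τ) + (1 / τ) * (1 - ε) = 1 - ε / τ := by field_simp; ring
    linarith
  set den : ℝ := v + a * B / 3 with hden_def
  have hden0 : 0 < den := by positivity
  set s : ℝ := a / den with hs_def
  have hs : 0 < s := by positivity
  have hsB3 : s * B < 3 := by
    rw [hs_def, div_mul_eq_mul_div, div_lt_iff₀ hden0]
    have : (0:ℝ) < 3 * v := by positivity
    rw [hden_def]
    nlinarith
  have hfrac : 1 - s * B / 3 = v / den := by
    rw [hs_def, hden_def]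
    field_simp
    ring
  -- the key exponent identity
  set G : ℝ := s * μ₀ + s ^ 2 * v / (2 * (1 - s * B / 3)) with hG_def
  have hG : G = s * μ₀ + s * a / 2 := by
    rw [hG_def, hfrac, hs_def]
    field_simp
  -- T bound
  have hlog : 0 < Real.log (1 / δ) :=
    Real.log_pos (by rw [lt_div_iff₀ hδ.1]; linarith [hδ.2])
  have hCoef : 6.5 / a ^ 2 + 2 * B / (3 * a) = 2 * den / a ^ 2 := by
    rw [hden_def, hv_def]
    field_simp
    ring
  have hTpos : (0 : ℝ) < T := by
    have h1 : 0 < (6.5 / a ^ 2 + 2 * B / (3 * a)) * Real.log (1 / δ) := by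
      apply mul_pos _ hlog
      positivity
    calc (0:ℝ) < _ := h1
    _ ≤ T := hT
  have hTkey : Real.log (1 / δ) ≤ (T : ℝ) * (s * a / 2) := by
    have hsa : s * a / 2 = a ^ 2 / (2 * den) := by
      rw [hs_def]; field_simp
    have h1 : (2 * den / a ^ 2) * Real.log (1 / δ) * (s * a / 2) ≤ (T:ℝ) * (s * a / 2) := by
      apply mul_le_mul_of_nonneg_right _ (by positivity)
      rw [← hCoef]; exact hT
    have h2 : (2 * den / a ^ 2) * Real.log (1 / δ) * (s * a / 2) = Real.log (1 / δ) := by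
      rw [hsa]
      field_simp
    linarith
  -- integrability
  have hint : ∀ t : Fin T, Integrable (fun x => Real.exp (s * ω t x)) μ := by
    intro t
    refine Integrable.mono' (integrable_const (Real.exp (s * B)))
      (((hmeas t).const_mul s).exp.aestronglyMeasurable) ?_
    filter_upwards [hbound t] with x hx
    rw [Real.norm_eq_abs, abs_of_pos (Real.exp_pos _), Real.exp_le_exp]
    exact mul_le_mul_of_nonneg_left hx.2 hs.le
  have hintsum : Integrable (fun x => Real.exp (s * (∑ t, ω t) x)) μ :=
    hindep.integrable_exp_mul_sum hmeas (fun i _ => hint i)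
  -- Chernoff
  have hcher := measure_ge_le_exp_mul_mgf (X := ∑ t, ω t) (μ := μ)
    ((1 - ε') * T) hs.le hintsum
  -- mgf bound
  have hmgf_each : ∀ t : Fin T, mgf (ω t) μ s ≤ Real.exp G := by
    intro t
    exact mgf_le_of_bounded μ (ω t) (hmeas t) B hB1 (hbound t) μ₀ v s hμ0nn (hmean t)
      (hvar t) hv0.le hs hsB3
  have hmgf_sum : mgf (∑ t, ω t) μ s ≤ Real.exp ((T : ℝ) * G) := by
    rw [hindep.mgf_sum hmeas]
    calc ∏ t : Fin T, mgf (ω t) μ s ≤ ∏ t : Fin T, Real.exp G :=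
      Finset.prod_le_prod (fun t _ => mgf_nonneg) (fun t _ => hmgf_each t)
    _ = Real.exp G ^ T := by rw [Finset.prod_const, Finset.card_univ, Fintype.card_fin]
    _ = Real.exp ((T : ℝ) * G) := by rw [← Real.exp_nat_mul]
  -- put together
  clear_value G s den μ₀ v B a
  have hexp_le : Real.exp (-s * ((1 - ε') * T)) * Real.exp ((T : ℝ) * G) ≤ δ := by
    rw [← Real.exp_add, ← Real.exp_log hδ.1, Real.exp_le_exp]
    have h1 : -s * ((1 - ε') * T) + (T : ℝ) * G = (T : ℝ) * (G - s * (1 - ε')) := by ring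
    have h2 : G - s * (1 - ε') ≤ -(s * a / 2) := by
      rw [hG]
      have hmm : μ₀ - (1 - ε') ≤ -a := by
        rw [ha_def]; linarith
      have h5 := mul_le_mul_of_nonneg_left hmm hs.le
      have hexpand : s * (μ₀ - (1 - ε')) = s * μ₀ - s * (1 - ε') := by ring
      have hneg : s * -a = -(s * a) := by ring
      rw [hexpand, hneg] at h5
      linarith [h5]
    have h3 : (T : ℝ) * (G - s * (1 - ε')) ≤ (T : ℝ) * (-(s * a / 2)) :=
      mul_le_mul_of_nonneg_left h2 hTpos.le
    have h4 : Real.log (1 / δ) = -Real.log δ := by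
      rw [one_div, Real.log_inv]
    rw [h1]
    calc (T : ℝ) * (G - s * (1 - ε')) ≤ (T : ℝ) * (-(s * a / 2)) := h3
    _ = -((T : ℝ) * (s * a / 2)) := by ring
    _ ≤ -Real.log (1 / δ) := by linarith
    _ = Real.log δ := by rw [h4]; ring
  have hreal : (μ {x | (1 - ε') * (T : ℝ) ≤ (∑ t, ω t) x}).toReal ≤ δ := by
    calc (μ {x | (1 - ε') * (T : ℝ) ≤ (∑ t, ω t) x}).toReal
        ≤ Real.exp (-s * ((1 - ε') * T)) * mgf (∑ t, ω t) μ s := hcher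
    _ ≤ Real.exp (-s * ((1 - ε') * T)) * Real.exp ((T : ℝ) * G) :=
        mul_le_mul_of_nonneg_left hmgf_sum (Real.exp_pos _).le
    _ ≤ δ := hexp_le
  have hset : {x | (∑ t, ω t x) / T ≥ 1 - ε'} = {x | (1 - ε') * (T : ℝ) ≤ (∑ t, ω t) x} := by
    ext x
    simp only [Set.mem_setOf_eq, ge_iff_le, Finset.sum_apply]
    rw [le_div_iff₀ hTpos]
  rw [hset]
  rw [← ENNReal.ofReal_toReal (measure_ne_top μ _)]
  exact ENNReal.ofReal_le_ofReal hreal
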